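/- For every integer N₀ ≥ 1 there exists a family {(l_k, m_k) : k ∈ ℤ³, 0 < |k|_∞ ≤ N₀} of pairs of lattice vectors such that: (1) if k ∈ ℤ³_+ then l_k, −m_k ∈ ℤ³_+ with |l_k|_∞ > N₀, |m_k|_∞ > N₀ and l_k + m_k = k; (2) if k ∈ ℤ³_− then l_k, m_k ∈ ℤ³_+ with |l_k|_∞, |m_k|_∞ > N₀ and l_k − m_k = k; (3) |l_k| ≠ |m_k| and l_k, m_k are linearly independent for all k; (4) |l_k|, |m_k| ≥ 2^{(2N₀+1)³} for all k; (5) for distinct k₁ ≠ k₂, all of |l_{k₁} ± l_{k₂}|, |m_{k₁} ± m_{k₂}|, |l_{k₁} ± m_{k₂}|, |m_{k₁} ± l_{k₂}| are at least 2^{(2N₀+1)³}. -/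

import Mathlib

/-- The sup-norm `|k|_∞ = max_i |k_i|` of a lattice vector. -/
def ninf (k : Fin 3 → ℤ) : ℤ := max |k 0| (max |k 1| |k 2|)

/-- `ℤ³₊`: the first nonzero coordinate is positive. -/
def Zplus (k : Fin 3 → ℤ) : Prop :=
  0 < k 0 ∨ (k 0 = 0 ∧ 0 < k 1) ∨ (k 0 = 0 ∧ k 1 = 0 ∧ 0 < k 2)

/-- `ℤ³₋ = −ℤ³₊`. -/
def Zminus (k : Fin 3 → ℤ) : Prop := Zplus (-k)

/-- `a` and `b` are `B`-separated: both `|a + b|` and `|a − b|` are at least `B`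
(in Euclidean norm, stated for the squares). -/
def farApart (a b : Fin 3 → ℤ) (B : ℤ) : Prop :=
  B ^ 2 ≤ (∑ i, (a i + b i) ^ 2) ∧ B ^ 2 ≤ (∑ i, (a i - b i) ^ 2)

namespace SepAux

def Bx (N₀ : ℕ) : ℤ := 2 ^ ((2 * N₀ + 1) ^ 3)

def Ex (N₀ : ℕ) (k : Fin 3 → ℤ) : ℕ :=
  ((k 0 + N₀) + (2 * N₀ + 1) * ((k 1 + N₀) + (2 * N₀ + 1) * (k 2 + N₀))).toNat

def ax (N₀ : ℕ) (k : Fin 3 → ℤ) : ℤ := 16 * Bx N₀ * 4 ^ Ex N₀ k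

def bx (N₀ : ℕ) : ℤ := (N₀ : ℤ) ^ 2 + 1

def mv (N₀ : ℕ) (k : Fin 3 → ℤ) : Fin 3 → ℤ := ![ax N₀ k, bx N₀, 0]

def Lf (N₀ : ℕ) (k : Fin 3 → ℤ) : Fin 3 → ℤ := k + mv N₀ k

open Classical in
noncomputable def Mf (N₀ : ℕ) (k : Fin 3 → ℤ) : Fin 3 → ℤ :=
  if Zplus k then -(mv N₀ k) else mv N₀ k

lemma hBpos (N₀ : ℕ) : 0 < Bx N₀ := by unfold Bx; positivity

lemma hBN (N₀ : ℕ) : (N₀ : ℤ) < Bx N₀ := by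
  have h1 : N₀ < 2 ^ N₀ := Nat.lt_two_pow_self (n := N₀)
  have h2 : (2:ℕ) ^ N₀ ≤ 2 ^ ((2 * N₀ + 1) ^ 3) :=
    Nat.pow_le_pow_right (by norm_num)
      (by have := Nat.le_self_pow (n := 3) (by norm_num) (2 * N₀ + 1); omega)
  unfold Bx; exact_mod_cast lt_of_lt_of_le h1 h2

lemma hBN3 (N₀ : ℕ) : (N₀ : ℤ) ^ 3 < Bx N₀ := by
  have h1 : N₀ ^ 3 < 2 ^ (N₀ ^ 3) := Nat.lt_two_pow_self (n := N₀ ^ 3)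
  have h2 : (2:ℕ) ^ (N₀ ^ 3) ≤ 2 ^ ((2 * N₀ + 1) ^ 3) :=
    Nat.pow_le_pow_right (by norm_num) (Nat.pow_le_pow_left (by omega) 3)
  unfold Bx; exact_mod_cast lt_of_lt_of_le h1 h2

lemma ha16 (N₀ : ℕ) (k : Fin 3 → ℤ) : 16 * Bx N₀ ≤ ax N₀ k := by
  have h1 : (1:ℤ) ≤ 4 ^ Ex N₀ k := one_le_pow₀ (by norm_num)
  have h2 := hBpos N₀
  unfold ax; nlinarith

lemma box_abs {N₀ : ℕ} {k : Fin 3 → ℤ} (h : ninf k ≤ N₀) :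
    |k 0| ≤ N₀ ∧ |k 1| ≤ N₀ ∧ |k 2| ≤ N₀ := by
  unfold ninf at h
  simp only [max_le_iff] at h
  exact ⟨h.1, h.2.1, h.2.2⟩

lemma box_ne {k : Fin 3 → ℤ} (h : 0 < ninf k) : k 0 ≠ 0 ∨ k 1 ≠ 0 ∨ k 2 ≠ 0 := by
  by_contra h'
  push_neg at h'
  unfold ninf at h
  simp [h'.1, h'.2.1, h'.2.2] at h

lemma digit {d x x' y y' : ℤ} (hx0 : 0 ≤ x) (hxd : x < d) (hx0' : 0 ≤ x') (hxd' : x' < d)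
    (h : x + d * y = x' + d * y') : x = x' ∧ y = y' := by
  have hd : 0 < d := lt_of_le_of_lt hx0 hxd
  have hy : y = y' := by
    by_contra hne
    have h1 : x - x' = d * (y' - y) := by linarith
    have h2 : (1:ℤ) ≤ |y' - y| := Int.one_le_abs (sub_ne_zero.mpr (Ne.symm hne))
    have h3 : d ≤ |d * (y' - y)| := by
      rw [abs_mul, abs_of_pos hd]; nlinarith
    rw [← h1] at h3
    have h4 : |x - x'| < d := abs_sub_lt_iff.mpr ⟨by linarith, by linarith⟩
    linarith
  refine ⟨by rw [hy] at h; linarith, hy⟩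

lemma ex_inj (N₀ : ℕ) {k₁ k₂ : Fin 3 → ℤ}
    (h1 : |k₁ 0| ≤ N₀ ∧ |k₁ 1| ≤ N₀ ∧ |k₁ 2| ≤ N₀)
    (h2 : |k₂ 0| ≤ N₀ ∧ |k₂ 1| ≤ N₀ ∧ |k₂ 2| ≤ N₀)
    (h : Ex N₀ k₁ = Ex N₀ k₂) : k₁ = k₂ := by
  set d : ℤ := 2 * N₀ + 1 with hd
  obtain ⟨a0, a1, a2⟩ := h1
  obtain ⟨b0, b1, b2⟩ := h2
  rw [abs_le] at a0 a1 a2 b0 b1 b2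
  have bnds : ∀ z : ℤ, -(N₀:ℤ) ≤ z → z ≤ N₀ → 0 ≤ z + N₀ ∧ z + N₀ < d := by
    intro z hz1 hz2; constructor <;> [linarith; · rw [hd]; push_cast; linarith]
  have p0 := bnds _ a0.1 a0.2
  have p1 := bnds _ a1.1 a1.2
  have p2 := bnds _ a2.1 a2.2
  have q0 := bnds _ b0.1 b0.2
  have q1 := bnds _ b1.1 b1.2
  have q2 := bnds _ b2.1 b2.2
  have hdpos : (0:ℤ) < d := lt_of_le_of_lt p0.1 p0.2
  have hnn1 : (0:ℤ) ≤ (k₁ 0 + N₀) + d * ((k₁ 1 + N₀) + d * (k₁ 2 + N₀)) :=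
    add_nonneg p0.1 (mul_nonneg hdpos.le (add_nonneg p1.1 (mul_nonneg hdpos.le p2.1)))
  have hnn2 : (0:ℤ) ≤ (k₂ 0 + N₀) + d * ((k₂ 1 + N₀) + d * (k₂ 2 + N₀)) :=
    add_nonneg q0.1 (mul_nonneg hdpos.le (add_nonneg q1.1 (mul_nonneg hdpos.le q2.1)))
  unfold Ex at h
  have hz : (k₁ 0 + N₀) + d * ((k₁ 1 + N₀) + d * (k₁ 2 + N₀)) =
      (k₂ 0 + N₀) + d * ((k₂ 1 + N₀) + d * (k₂ 2 + N₀)) := by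
    have e1 := Int.toNat_of_nonneg hnn1
    have e2 := Int.toNat_of_nonneg hnn2
    rw [← e1, ← e2]
    exact_mod_cast congrArg (Nat.cast : ℕ → ℤ) h
  have s1 := digit p0.1 p0.2 q0.1 q0.2 hz
  have s2 := digit p1.1 p1.2 q1.1 q1.2 s1.2
  funext i
  fin_cases i
  · simpa using by linarith [s1.1]
  · simpa using by linarith [s2.1]
  · simpa using by linarith [s2.2]

lemma a_lt (N₀ : ℕ) {k₁ k₂ : Fin 3 → ℤ} (h : Ex N₀ k₁ < Ex N₀ k₂) :
    4 * ax N₀ k₁ ≤ ax N₀ k₂ := by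
  have h1 : (4:ℤ) ^ (Ex N₀ k₁ + 1) ≤ 4 ^ Ex N₀ k₂ :=
    pow_le_pow_right₀ (by norm_num) h
  have hB := hBpos N₀
  unfold ax
  calc 4 * (16 * Bx N₀ * 4 ^ Ex N₀ k₁) = 16 * Bx N₀ * 4 ^ (Ex N₀ k₁ + 1) := by ring
    _ ≤ 16 * Bx N₀ * 4 ^ Ex N₀ k₂ := by
        apply mul_le_mul_of_nonneg_left h1 (by positivity)

lemma habs (u v : ℤ) : |u| - |v| ≤ |u + v| := by
  have h := abs_add_le (u + v) (-v)
  simp only [add_neg_cancel_right, abs_neg] at h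
  linarith

lemma sep_key {a₁ a₂ n B x y : ℤ} (hn : n < B)
    (h4 : 4 * a₁ ≤ a₂ ∨ 4 * a₂ ≤ a₁) (h16 : 16 * B ≤ a₁) (h16' : 16 * B ≤ a₂)
    (hx1 : a₁ - n ≤ |x|) (hx2 : |x| ≤ a₁ + n) (hy1 : a₂ - n ≤ |y|) (hy2 : |y| ≤ a₂ + n) :
    B ≤ |x + y| ∧ B ≤ |x - y| := by
  have h1 : |x| - |y| ≤ |x + y| := habs x y
  have h1' : |y| - |x| ≤ |x + y| := by have := habs y x; rwa [add_comm] at this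
  have h2 : |x| - |y| ≤ |x - y| := by have := habs x (-y); simpa [sub_eq_add_neg] using this
  have h2' : |y| - |x| ≤ |x - y| := by
    have := habs y (-x)
    rw [abs_neg] at this
    calc |y| - |x| ≤ |y + -x| := this
      _ = |x - y| := by rw [← abs_neg]; ring_nf
  rcases h4 with h | h
  · constructor <;> linarith
  · constructor <;> linarith

lemma far_of_first {x y : Fin 3 → ℤ} {B : ℤ} (hB : 0 ≤ B)
    (h1 : B ≤ |x 0 + y 0|) (h2 : B ≤ |x 0 - y 0|) : farApart x y B := by
  constructor
  · have hsq : B ^ 2 ≤ (x 0 + y 0) ^ 2 := by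
      have := pow_le_pow_left₀ hB h1 2; rwa [sq_abs] at this
    rw [Fin.sum_univ_three]
    nlinarith [sq_nonneg (x 1 + y 1), sq_nonneg (x 2 + y 2)]
  · have hsq : B ^ 2 ≤ (x 0 - y 0) ^ 2 := by
      have := pow_le_pow_left₀ hB h2 2; rwa [sq_abs] at this
    rw [Fin.sum_univ_three]
    nlinarith [sq_nonneg (x 1 - y 1), sq_nonneg (x 2 - y 2)]

lemma solve_aux {a b k0 k1 k2 s t : ℤ} (ha : 0 < a) (hb : 0 < b)
    (hbig : |b * k0| < a)
    (h1 : s * (k0 + a) + t * a = 0) (h2 : s * (k1 + b) + t * b = 0) (h3 : s * k2 = 0)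
    (hnz : k0 ≠ 0 ∨ k1 ≠ 0 ∨ k2 ≠ 0) : s = 0 ∧ t = 0 := by
  have hs : s = 0 := by
    by_contra hs
    have key : s * (b * k0 - a * k1) = 0 := by linear_combination b * h1 - a * h2
    have hk : b * k0 = a * k1 := by
      rcases mul_eq_zero.mp key with h | h
      · exact absurd h hs
      · linarith
    rcases eq_or_ne k1 0 with h | h
    · have hk0 : k0 = 0 := by
        rw [h, mul_zero] at hk
        rcases mul_eq_zero.mp hk with h' | h'
        · exact absurd h' hb.ne'
        · exact h'
      have hk2 : k2 ≠ 0 := by tauto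
      rcases mul_eq_zero.mp h3 with h' | h'
      · exact hs h'
      · exact hk2 h'
    · have : a ≤ |a * k1| := by
        rw [abs_mul, abs_of_pos ha]
        nlinarith [Int.one_le_abs h]
      rw [← hk] at this
      linarith
  refine ⟨hs, ?_⟩
  rw [hs] at h1
  simp at h1
  rcases h1 with h | h
  · exact h
  · exact absurd h ha.ne'

lemma norm_ne {n a b k0 k1 k2 : ℤ} (hn : 1 ≤ n) (hb : b = n ^ 2 + 1)
    (ha : n ^ 3 + 2 * n ^ 2 + n < a)
    (h00 : -n ≤ k0) (h01 : k0 ≤ n) (h10 : -n ≤ k1) (h11 : k1 ≤ n)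
    (h20 : -n ≤ k2) (h21 : k2 ≤ n) (hnz : k0 ≠ 0 ∨ k1 ≠ 0 ∨ k2 ≠ 0)
    (hD : 2 * a * k0 + k0 ^ 2 + 2 * b * k1 + k1 ^ 2 + k2 ^ 2 = 0) : False := by
  subst hb
  have ha0 : 0 < a := by nlinarith
  have s0 : k0 ^ 2 ≤ n ^ 2 := by nlinarith
  have s1 : k1 ^ 2 ≤ n ^ 2 := by nlinarith
  have s2 : k2 ^ 2 ≤ n ^ 2 := by nlinarith
  rcases lt_trichotomy k0 0 with h | h | h
  · have t1 : 2 * a * k0 ≤ -(2 * a) := by nlinarith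
    have t2 : 2 * (n ^ 2 + 1) * k1 ≤ 2 * (n ^ 2 + 1) * n := by nlinarith
    nlinarith
  · rcases lt_trichotomy k1 0 with h1 | h1 | h1
    · have t2 : 2 * (n ^ 2 + 1) * k1 ≤ -(2 * (n ^ 2 + 1)) := by nlinarith
      rw [h] at hD
      linarith
    · have hk2 : k2 ≠ 0 := by tauto
      have t3 : 1 ≤ k2 ^ 2 := by
        have := Int.one_le_abs hk2
        nlinarith [sq_abs k2]
      rw [h, h1] at hD
      linarith
    · have t2 : 2 * (n ^ 2 + 1) ≤ 2 * (n ^ 2 + 1) * k1 := by nlinarith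
      rw [h] at hD
      nlinarith [sq_nonneg k1, sq_nonneg k2]
  · have t1 : 2 * a ≤ 2 * a * k0 := by nlinarith
    have t2 : -(2 * (n ^ 2 + 1) * n) ≤ 2 * (n ^ 2 + 1) * k1 := by nlinarith
    nlinarith [sq_nonneg k0, sq_nonneg k1, sq_nonneg k2]

end SepAux


set_option maxHeartbeats 2000000 in
open SepAux in
/-- Existence of a separated family of high-frequency pairs `(l_k, m_k)`
generating every low mode `k` (`0 < |k|_∞ ≤ N₀`), as used to decouple the
low-mode control equations. -/
theorem separated_high_frequency_pairs (N₀ : ℕ) (hN₀ : 1 ≤ N₀) :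
    ∃ L M : (Fin 3 → ℤ) → (Fin 3 → ℤ),
      (∀ k, 0 < ninf k → ninf k ≤ N₀ →
        -- (1) positive low modes
        (Zplus k → Zplus (L k) ∧ Zplus (-(M k)) ∧ (N₀ : ℤ) < ninf (L k) ∧
          (N₀ : ℤ) < ninf (M k) ∧ L k + M k = k) ∧
        -- (2) negative low modes
        (Zminus k → Zplus (L k) ∧ Zplus (M k) ∧ (N₀ : ℤ) < ninf (L k) ∧
          (N₀ : ℤ) < ninf (M k) ∧ L k - M k = k) ∧
        -- (3) distinct lengths and linear independence
        (∑ i, (L k i) ^ 2) ≠ (∑ i, (M k i) ^ 2) ∧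
        LinearIndependent ℤ ![L k, M k] ∧
        -- (4) high frequency lower bound `|l_k|, |m_k| ≥ 2^{(2N₀+1)³}`
        ((2 : ℤ) ^ ((2 * N₀ + 1) ^ 3)) ^ 2 ≤ (∑ i, (L k i) ^ 2) ∧
        ((2 : ℤ) ^ ((2 * N₀ + 1) ^ 3)) ^ 2 ≤ (∑ i, (M k i) ^ 2)) ∧
      -- (5) separation between the pairs attached to distinct low modes
      (∀ k₁ k₂, 0 < ninf k₁ → ninf k₁ ≤ N₀ → 0 < ninf k₂ → ninf k₂ ≤ N₀ →
        k₁ ≠ k₂ →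
          farApart (L k₁) (L k₂) (2 ^ ((2 * N₀ + 1) ^ 3)) ∧
          farApart (M k₁) (M k₂) (2 ^ ((2 * N₀ + 1) ^ 3)) ∧
          farApart (L k₁) (M k₂) (2 ^ ((2 * N₀ + 1) ^ 3)) ∧
          farApart (M k₁) (L k₂) (2 ^ ((2 * N₀ + 1) ^ 3))) := by
  refine ⟨Lf N₀, Mf N₀, ?_, ?_⟩
  · intro k h0 hN
    obtain ⟨hk0, hk1, hk2⟩ := box_abs hN
    have hknz := box_ne h0
    rw [abs_le] at hk0 hk1 hk2
    have hB0 := hBpos N₀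
    have hBN' := hBN N₀
    have hBN3' := hBN3 N₀
    have haB := ha16 N₀ k
    have hN1 : (1:ℤ) ≤ (N₀:ℤ) := by exact_mod_cast hN₀
    have hb : (0:ℤ) < bx N₀ := by unfold bx; positivity
    have hbval : bx N₀ = (N₀:ℤ)^2 + 1 := rfl
    have hN23 : ((N₀:ℤ))^2 ≤ ((N₀:ℤ))^3 := by nlinarith
    have hN13 : (N₀:ℤ) ≤ ((N₀:ℤ))^3 := by nlinarith
    have hbN : bx N₀ * (N₀:ℤ) < 2 * Bx N₀ := by nlinarith
    have haN : (N₀:ℤ) < ax N₀ k := by linarith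
    have hL0 : Lf N₀ k 0 = k 0 + ax N₀ k := by simp [Lf, mv]
    have hL1 : Lf N₀ k 1 = k 1 + bx N₀ := by simp [Lf, mv]
    have hL2 : Lf N₀ k 2 = k 2 := by simp [Lf, mv]
    have hm0 : mv N₀ k 0 = ax N₀ k := rfl
    have hm1 : mv N₀ k 1 = bx N₀ := rfl
    have hm2 : mv N₀ k 2 = 0 := rfl
    have hMsq : ∀ i, Mf N₀ k i ^ 2 = mv N₀ k i ^ 2 := by
      intro i
      by_cases hp : Zplus k <;> simp [Mf, hp, neg_sq]
    have hBeq : ((2:ℤ) ^ ((2 * N₀ + 1) ^ 3)) = Bx N₀ := rfl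
    refine ⟨?_, ?_, ?_, ?_, ?_, ?_⟩
    · -- (1)
      intro hp
      have hM : Mf N₀ k = -(mv N₀ k) := by simp [Mf, hp]
      refine ⟨Or.inl ?_, ?_, ?_, ?_, ?_⟩
      · rw [hL0]; linarith
      · rw [hM, neg_neg]; exact Or.inl (by rw [hm0]; linarith)
      · have h1 : (N₀:ℤ) < |Lf N₀ k 0| := by
          rw [hL0, abs_of_pos (by linarith)]; linarith
        exact lt_of_lt_of_le h1 (le_max_left _ _)
      · have h1 : (N₀:ℤ) < |Mf N₀ k 0| := by
          rw [hM, Pi.neg_apply, hm0, abs_neg, abs_of_pos (by linarith)]; linarith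
        exact lt_of_lt_of_le h1 (le_max_left _ _)
      · rw [hM]; unfold Lf; abel
    · -- (2)
      intro hm
      have hnp : ¬ Zplus k := by
        intro hp
        unfold Zminus Zplus at hm
        unfold Zplus at hp
        simp only [Pi.neg_apply] at hm
        omega
      have hM : Mf N₀ k = mv N₀ k := by simp [Mf, hnp]
      refine ⟨Or.inl ?_, ?_, ?_, ?_, ?_⟩
      · rw [hL0]; linarith
      · rw [hM]; exact Or.inl (by rw [hm0]; linarith)
      · have h1 : (N₀:ℤ) < |Lf N₀ k 0| := by
          rw [hL0, abs_of_pos (by linarith)]; linarith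
        exact lt_of_lt_of_le h1 (le_max_left _ _)
      · have h1 : (N₀:ℤ) < |Mf N₀ k 0| := by
          rw [hM, hm0, abs_of_pos (by linarith)]; linarith
        exact lt_of_lt_of_le h1 (le_max_left _ _)
      · rw [hM]; unfold Lf; abel
    · -- (3a)
      intro heq
      rw [Fin.sum_univ_three, Fin.sum_univ_three, hMsq 0, hMsq 1, hMsq 2,
        hL0, hL1, hL2, hm0, hm1, hm2] at heq
      have hD : 2*(ax N₀ k)*(k 0) + (k 0)^2 + 2*(bx N₀)*(k 1) + (k 1)^2 + (k 2)^2 = 0 := by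
        linear_combination heq
      have hagt : (N₀:ℤ)^3 + 2*(N₀:ℤ)^2 + (N₀:ℤ) < ax N₀ k := by linarith
      exact norm_ne hN1 hbval hagt hk0.1 hk0.2 hk1.1 hk1.2 hk2.1 hk2.2 hknz hD
    · -- (3b)
      rw [LinearIndependent.pair_iff]
      intro s t hst
      have e0 := congrFun hst 0
      have e1 := congrFun hst 1
      have e2 := congrFun hst 2
      simp only [Pi.add_apply, Pi.smul_apply, smul_eq_mul, Pi.zero_apply] at e0 e1 e2
      have hapos : (0:ℤ) < ax N₀ k := by linarith
      have hbig : |bx N₀ * k 0| < ax N₀ k := by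
        rw [abs_mul, abs_of_pos hb]
        have h1 : bx N₀ * |k 0| ≤ bx N₀ * (N₀:ℤ) :=
          mul_le_mul_of_nonneg_left (abs_le.mpr hk0) hb.le
        linarith
      by_cases hp : Zplus k
      · have hM : Mf N₀ k = -(mv N₀ k) := by simp [Mf, hp]
        rw [hL0, hM] at e0
        rw [hL1, hM] at e1
        rw [hL2, hM] at e2
        simp only [Pi.neg_apply, hm0, hm1, hm2] at e0 e1 e2
        have f0 : s * (k 0 + ax N₀ k) + (-t) * ax N₀ k = 0 := by linear_combination e0
        have f1 : s * (k 1 + bx N₀) + (-t) * bx N₀ = 0 := by linear_combination e1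
        have f2 : s * k 2 = 0 := by linear_combination e2
        obtain ⟨hs, ht⟩ := solve_aux hapos hb hbig f0 f1 f2 hknz
        exact ⟨hs, by linarith⟩
      · have hM : Mf N₀ k = mv N₀ k := by simp [Mf, hp]
        rw [hL0, hM] at e0
        rw [hL1, hM] at e1
        rw [hL2, hM] at e2
        simp only [hm0, hm1, hm2] at e0 e1 e2
        have f0 : s * (k 0 + ax N₀ k) + t * ax N₀ k = 0 := by linear_combination e0
        have f1 : s * (k 1 + bx N₀) + t * bx N₀ = 0 := by linear_combination e1
        have f2 : s * k 2 = 0 := by linear_combination e2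
        exact solve_aux hapos hb hbig f0 f1 f2 hknz
    · -- (4L)
      rw [hBeq, Fin.sum_univ_three, hL0, hL1, hL2]
      have hBa : Bx N₀ ≤ k 0 + ax N₀ k := by linarith
      have hsq : (Bx N₀)^2 ≤ (k 0 + ax N₀ k)^2 := pow_le_pow_left₀ hB0.le hBa 2
      linarith [sq_nonneg (k 1 + bx N₀), sq_nonneg (k 2)]
    · -- (4M)
      rw [hBeq, Fin.sum_univ_three, hMsq 0, hMsq 1, hMsq 2, hm0, hm1, hm2]
      have hBa : Bx N₀ ≤ ax N₀ k := by linarith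
      have hsq : (Bx N₀)^2 ≤ (ax N₀ k)^2 := pow_le_pow_left₀ hB0.le hBa 2
      have hb2 := sq_nonneg (bx N₀)
      norm_num
      linarith
  · -- (5)
    intro k₁ k₂ h01 hN1 h02 hN2 hne
    have hB0 := hBpos N₀
    have hBN' := hBN N₀
    have hEne : Ex N₀ k₁ ≠ Ex N₀ k₂ := fun h => hne (ex_inj N₀ (box_abs hN1) (box_abs hN2) h)
    have h4 : 4 * ax N₀ k₁ ≤ ax N₀ k₂ ∨ 4 * ax N₀ k₂ ≤ ax N₀ k₁ :=
      hEne.lt_or_gt.imp (a_lt N₀) (a_lt N₀)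
    have h16a := ha16 N₀ k₁
    have h16b := ha16 N₀ k₂
    have key : ∀ k : Fin 3 → ℤ, ninf k ≤ N₀ →
        (ax N₀ k - N₀ ≤ |Lf N₀ k 0| ∧ |Lf N₀ k 0| ≤ ax N₀ k + N₀) ∧
        (ax N₀ k - N₀ ≤ |Mf N₀ k 0| ∧ |Mf N₀ k 0| ≤ ax N₀ k + N₀) := by
      intro k hN
      obtain ⟨hk0, -, -⟩ := box_abs hN
      rw [abs_le] at hk0
      have haB := ha16 N₀ k
      have hL0 : Lf N₀ k 0 = k 0 + ax N₀ k := by simp [Lf, mv]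
      have habs : |Lf N₀ k 0| = k 0 + ax N₀ k := by
        rw [hL0]; exact abs_of_pos (by linarith)
      have hM0 : |Mf N₀ k 0| = ax N₀ k := by
        have hax : (0:ℤ) ≤ ax N₀ k := by linarith
        by_cases hp : Zplus k
        · have hM : Mf N₀ k = -(mv N₀ k) := by simp [Mf, hp]
          rw [hM, Pi.neg_apply, abs_neg]
          exact abs_of_nonneg hax
        · have hM : Mf N₀ k = mv N₀ k := by simp [Mf, hp]
          rw [hM]
          exact abs_of_nonneg hax
      refine ⟨⟨by rw [habs]; linarith, by rw [habs]; linarith⟩,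
        ⟨by rw [hM0]; linarith, by rw [hM0]; linarith⟩⟩
    obtain ⟨⟨l11, l12⟩, m11, m12⟩ := key k₁ hN1
    obtain ⟨⟨l21, l22⟩, m21, m22⟩ := key k₂ hN2
    have c1 := sep_key hBN' h4 h16a h16b l11 l12 l21 l22
    have c2 := sep_key hBN' h4 h16a h16b m11 m12 m21 m22
    have c3 := sep_key hBN' h4 h16a h16b l11 l12 m21 m22
    have c4 := sep_key hBN' h4 h16a h16b m11 m12 l21 l22
    exact ⟨far_of_first hB0.le c1.1 c1.2, far_of_first hB0.le c2.1 c2.2,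
      far_of_first hB0.le c3.1 c3.2, far_of_first hB0.le c4.1 c4.2⟩
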